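/- Let X₁, X₂, ... be a stationary, ergodic real-valued time series with finite mean μ = E[X₁], and let X̄_n = n⁻¹ Σ_{i=1}^n X_i. Then, almost surely as n → ∞, the proportion of indices i ≤ n with X_i strictly between min(X̄_n, μ) and max(X̄_n, μ) converges to 0. -/

import Mathlib

open MeasureTheory Filter Topology

namespace BirkAux
variable {Ω : Type*} (T : Ω → Ω)

/-- Birkhoff sum. -/
noncomputable def S (f : Ω → ℝ) (n : ℕ) (ω : Ω) : ℝ := ∑ i ∈ Finset.range n, f (T^[i] ω)

variable {T}

lemma S_succ' (f : Ω → ℝ) (n : ℕ) (ω : Ω) : S T f (n + 1) ω = f ω + S T f n (T ω) := by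
  simp only [S, Finset.sum_range_succ']
  rw [add_comm]
  rfl

lemma S_add (f : Ω → ℝ) (m n : ℕ) (ω : Ω) :
    S T f (m + n) ω = S T f m ω + S T f n (T^[m] ω) := by
  simp only [S, Finset.sum_range_add]
  congr 1
  exact Finset.sum_congr rfl fun i _ => by rw [add_comm m i, Function.iterate_add_apply]

lemma S_mono {f g : Ω → ℝ} (h : ∀ x, f x ≤ g x) (n : ℕ) (ω : Ω) : S T f n ω ≤ S T g n ω :=
  Finset.sum_le_sum fun i _ => h _

lemma S_const (c : ℝ) (n : ℕ) (ω : Ω) : S T (fun _ => c) n ω = n * c := by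
  unfold S
  rw [Finset.sum_const, Finset.card_range, nsmul_eq_mul]

lemma S_sub (f g : Ω → ℝ) (n : ℕ) (ω : Ω) :
    S T (fun x => f x - g x) n ω = S T f n ω - S T g n ω := by
  simp [S, Finset.sum_sub_distrib]

lemma S_neg (f : Ω → ℝ) (n : ℕ) (ω : Ω) : S T (fun x => -f x) n ω = -S T f n ω := by
  simp [S]

/-- Key pointwise covering estimate (Keane–Petersen style). -/
lemma key_pointwise (g : Ω → ℝ) (N : ℕ)
    (h : ∀ y, ∃ n, 1 ≤ n ∧ n ≤ N ∧ 0 ≤ S T g n y) :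
    ∀ M : ℕ, ∀ x : Ω, -∑ i ∈ Finset.Ico (M - N) M, |g (T^[i] x)| ≤ S T g M x := by
  intro M
  induction M using Nat.strong_induction_on with
  | _ M ih =>
    intro x
    by_cases hM : M ≤ N
    · have : M - N = 0 := Nat.sub_eq_zero_of_le hM
      rw [this]
      have : S T g M x = ∑ i ∈ Finset.Ico 0 M, g (T^[i] x) := by
        unfold S; rw [Finset.range_eq_Ico]
      rw [this]
      have := Finset.sum_le_sum (f := fun i => -|g (T^[i] x)|)
        (g := fun i => g (T^[i] x)) (s := Finset.Ico 0 M)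
        (fun i _ => neg_abs_le _)
      simpa [Finset.sum_neg_distrib] using this
    · push_neg at hM
      obtain ⟨n, hn1, hnN, hS⟩ := h x
      have hnM : n < M := lt_of_le_of_lt hnN hM
      have hdec : S T g M x = S T g n x + S T g (M - n) (T^[n] x) := by
        conv_lhs => rw [← Nat.add_sub_cancel' hnM.le]
        exact S_add g n (M - n) x
      have hih := ih (M - n) (by omega) (T^[n] x)
      have hre : ∑ i ∈ Finset.Ico (M - n - N) (M - n), |g (T^[i] (T^[n] x))|
          = ∑ j ∈ Finset.Ico (n + (M - n - N)) M, |g (T^[j] x)| := by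
        rw [Finset.sum_Ico_eq_sum_range, Finset.sum_Ico_eq_sum_range]
        have hc : M - n - (M - n - N) = M - (n + (M - n - N)) := by omega
        rw [hc]
        refine Finset.sum_congr rfl fun j _ => ?_
        simp only [show n + (M - n - N) + j = M - n - N + (j + n) by omega,
          Function.iterate_add_apply]
      rw [hre] at hih
      have hsub : Finset.Ico (n + (M - n - N)) M ⊆ Finset.Ico (M - N) M := by
        apply Finset.Ico_subset_Ico _ le_rfl
        omega
      have hmono : ∑ j ∈ Finset.Ico (n + (M - n - N)) M, |g (T^[j] x)|
          ≤ ∑ j ∈ Finset.Ico (M - N) M, |g (T^[j] x)| :=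
        Finset.sum_le_sum_of_subset_of_nonneg hsub fun j _ _ => abs_nonneg _
      calc -∑ i ∈ Finset.Ico (M - N) M, |g (T^[i] x)|
          ≤ -∑ j ∈ Finset.Ico (n + (M - n - N)) M, |g (T^[j] x)| := neg_le_neg hmono
        _ ≤ S T g (M - n) (T^[n] x) := hih
        _ ≤ S T g n x + S T g (M - n) (T^[n] x) := by linarith
        _ = S T g M x := hdec.symm


variable [MeasurableSpace Ω] {P : Measure Ω} [IsProbabilityMeasure P]

lemma integral_comp_iterate (hT : MeasurePreserving T P P) {f : Ω → ℝ}
    (hfm : AEStronglyMeasurable f P) (i : ℕ) :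
    ∫ x, f (T^[i] x) ∂P = ∫ x, f x ∂P := by
  have h : MeasurePreserving T^[i] P P := hT.iterate i
  conv_rhs => rw [← h.map_eq]
  rw [integral_map h.measurable.aemeasurable (by rwa [h.map_eq])]

lemma integrable_comp_iterate (hT : MeasurePreserving T P P) {f : Ω → ℝ}
    (hfi : Integrable f P) (i : ℕ) :
    Integrable (fun x => f (T^[i] x)) P := by
  have h : MeasurePreserving T^[i] P P := hT.iterate i
  have h1 : AEStronglyMeasurable f (Measure.map T^[i] P) := by
    rw [h.map_eq]; exact hfi.aestronglyMeasurable
  have h2 : Integrable f (Measure.map T^[i] P) := by rwa [h.map_eq]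
  exact (integrable_map_measure h1 h.measurable.aemeasurable).mp h2

lemma S_measurable (hT : Measurable T) {f : Ω → ℝ} (hfm : Measurable f) (n : ℕ) :
    Measurable (S T f n) :=
  Finset.measurable_sum _ fun i _ => hfm.comp (hT.iterate i)

lemma S_integrable (hT : MeasurePreserving T P P) {f : Ω → ℝ} (hfi : Integrable f P) (n : ℕ) :
    Integrable (S T f n) P :=
  integrable_finset_sum _ fun i _ => integrable_comp_iterate hT hfi i

lemma integral_S (hT : MeasurePreserving T P P) {f : Ω → ℝ} (hfi : Integrable f P) (n : ℕ) :
    ∫ x, S T f n x ∂P = n * ∫ x, f x ∂P := by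
  unfold S
  rw [integral_finset_sum _ fun i _ => integrable_comp_iterate hT hfi i]
  rw [Finset.sum_congr rfl fun i _ => integral_comp_iterate hT hfi.aestronglyMeasurable i]
  simp [mul_comm]


/-- The key "0-1 law" lemma: if `c > ∫ f`, then a.e. `Sₙf ≤ n c` eventually. -/
lemma core (hT : Ergodic T P) {f : Ω → ℝ} (hfm : Measurable f) (hfi : Integrable f P)
    {c : ℝ} (hc : ∫ x, f x ∂P < c) :
    ∀ᵐ x ∂P, ∀ᶠ n in atTop, S T f n x ≤ n * c := by
  classical
  set E : Set Ω := {x | ∀ k : ℕ, ∃ᶠ n : ℕ in atTop, (n : ℝ) * (c - 1 / (k + 1)) < S T f n x} with hE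
  have hδpos : ∀ k : ℕ, (0:ℝ) < 1 / ((k:ℝ) + 1) := fun k => by positivity
  have hδhalf : ∀ k : ℕ, (1:ℝ) / (((2*k+1 : ℕ):ℝ) + 1) = (1 / ((k:ℝ) + 1)) / 2 := by
    intro k; push_cast; rw [div_div]; congr 1; ring
  have hSm : ∀ n, Measurable (S T f n) := S_measurable hT.toMeasurePreserving.measurable hfm
  have hEm : MeasurableSet E := by
    have : E = ⋂ (k : ℕ), ⋂ (a : ℕ), ⋃ (b : ℕ),
        {x | a ≤ b} ∩ {x | (b : ℝ) * (c - 1 / (k + 1)) < S T f b x} := by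
      ext x
      simp only [hE, Set.mem_setOf_eq, Set.mem_iInter, Set.mem_iUnion, Set.mem_inter_iff,
        frequently_atTop]
    rw [this]
    exact MeasurableSet.iInter fun k => MeasurableSet.iInter fun a => MeasurableSet.iUnion
      fun b => (MeasurableSet.const _).inter (measurableSet_lt measurable_const (hSm b))
  have hinv : T ⁻¹' E = E := by
    ext x
    simp only [Set.mem_preimage, hE, Set.mem_setOf_eq]
    constructor
    · -- T x ∈ E → x ∈ E
      intro hTx k
      set δ : ℝ := 1 / ((k:ℝ) + 1) with hδ
      have hfreq := hTx (2*k+1)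
      rw [frequently_atTop] at hfreq ⊢
      intro a
      obtain ⟨n₀, hn₀⟩ := exists_nat_ge (2 * (c - f x) / δ)
      obtain ⟨n, hn, hSn⟩ := hfreq (max a n₀)
      rw [hδhalf k] at hSn
      refine ⟨n + 1, le_trans (le_max_left a n₀) hn |>.trans (Nat.le_succ n), ?_⟩
      have hnn₀ : (n₀ : ℝ) ≤ n := Nat.cast_le.mpr (le_trans (le_max_right a n₀) hn)
      have hkey : 2 * (c - f x) ≤ (n : ℝ) * δ := by
        have := (div_le_iff₀ (hδpos k)).mp (le_trans hn₀ hnn₀)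
        linarith
      have hSsucc : S T f (n + 1) x = f x + S T f n (T x) := S_succ' f n x
      have hδ0 : (0:ℝ) < δ := hδpos k
      push_cast
      nlinarith [hSn, hSsucc]
    · -- x ∈ E → T x ∈ E
      intro hx k
      set δ : ℝ := 1 / ((k:ℝ) + 1) with hδ
      have hfreq := hx (2*k+1)
      rw [frequently_atTop] at hfreq ⊢
      intro a
      obtain ⟨n₀, hn₀⟩ := exists_nat_ge (2 * (f x - c) / δ + 2)
      obtain ⟨n, hn, hSn⟩ := hfreq (max (a+1) n₀)
      rw [hδhalf k] at hSn
      have hn1 : 1 ≤ n := le_trans (le_trans (Nat.le_add_left 1 a) (le_max_left _ _)) hn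
      obtain ⟨m, rfl⟩ : ∃ m, n = m + 1 := ⟨n - 1, by omega⟩
      refine ⟨m, by
        have := le_trans (le_max_left (a+1) n₀) hn; omega, ?_⟩
      have hnn₀ : (n₀ : ℝ) ≤ (m+1 : ℕ) := Nat.cast_le.mpr (le_trans (le_max_right _ n₀) hn)
      have hδ0 : (0:ℝ) < δ := hδpos k
      have hkey : 2 * (f x - c) / δ + 2 ≤ ((m+1 : ℕ) : ℝ) := le_trans hn₀ hnn₀
      have hkey2 : 2 * (f x - c) ≤ (((m+1 : ℕ) : ℝ) - 2) * δ := by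
        have h2 : 2 * (f x - c) / δ ≤ ((m+1 : ℕ) : ℝ) - 2 := by linarith
        have := (div_le_iff₀ hδ0).mp h2
        linarith
      have hSsucc : S T f (m + 1) x = f x + S T f m (T x) := S_succ' f m x
      push_cast at hSn hkey2 ⊢
      nlinarith [hSn, hSsucc]
  rcases hT.toPreErgodic.measure_self_or_compl_eq_zero hEm hinv with h0 | h1
  · -- P E = 0 : the good case
    have : ∀ᵐ x ∂P, x ∉ E := by
      rw [ae_iff]
      simpa using h0
    filter_upwards [this] with x hx
    rw [hE, Set.mem_setOf_eq] at hx
    push_neg at hx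
    obtain ⟨k, hk⟩ := hx
    filter_upwards [hk] with n hn
    have : (n:ℝ) * (c - 1/(k+1)) ≤ (n:ℝ) * c := by
      apply mul_le_mul_of_nonneg_left _ (Nat.cast_nonneg n)
      have := hδpos k
      linarith
    linarith
  · -- P Eᶜ = 0 : derive a contradiction
    exfalso
    set μ₀ : ℝ := ∫ x, f x ∂P with hμ₀
    set c' : ℝ := (μ₀ + c) / 2 with hc'
    have hc'1 : μ₀ < c' := by rw [hc']; linarith
    have hc'2 : c' < c := by rw [hc']; linarith
    have hEae : ∀ᵐ x ∂P, x ∈ E := by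
      have : P Eᶜ = 0 := h1
      rw [← compl_compl E]
      exact (MeasureTheory.measure_eq_zero_iff_ae_notMem.mp this).mono fun x hx => hx
    -- a.e. x admits some n ≥ 1 with n c' ≤ Sₙ f x
    have hgood : ∀ᵐ x ∂P, ∃ n : ℕ, 1 ≤ n ∧ (n : ℝ) * c' ≤ S T f n x := by
      obtain ⟨k₀, hk₀⟩ := exists_nat_one_div_lt (show (0:ℝ) < c - c' by linarith)
      filter_upwards [hEae] with x hx
      have hfreq := hx k₀
      rw [frequently_atTop] at hfreq
      obtain ⟨n, hn1, hSn⟩ := hfreq 1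
      refine ⟨n, hn1, le_of_lt (lt_of_le_of_lt ?_ hSn)⟩
      apply mul_le_mul_of_nonneg_left _ (Nat.cast_nonneg n)
      have : (1:ℝ)/(k₀+1) < c - c' := by exact_mod_cast hk₀
      linarith
    set F : ℕ → Set Ω := fun N => {x | ∃ n, 1 ≤ n ∧ n ≤ N ∧ (n : ℝ) * c' ≤ S T f n x} with hF
    have hFm : ∀ N, MeasurableSet (F N) := by
      intro N
      have : F N = ⋃ (n : ℕ), ({x | 1 ≤ n ∧ n ≤ N} ∩ {x | (n : ℝ) * c' ≤ S T f n x}) := by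
        ext x
        simp only [hF, Set.mem_setOf_eq, Set.mem_iUnion, Set.mem_inter_iff]
        tauto
      rw [this]
      exact MeasurableSet.iUnion fun n =>
        (MeasurableSet.const _).inter (measurableSet_le measurable_const (hSm n))
    have hcover : ∀ᵐ x ∂P, x ∈ ⋃ N, F N := by
      filter_upwards [hgood] with x hx
      obtain ⟨n, hn1, hSn⟩ := hx
      exact Set.mem_iUnion.mpr ⟨n, n, hn1, le_refl n, hSn⟩
    have hFmono : Monotone F := fun N N' hNN' x hx => by
      obtain ⟨n, h1, h2, h3⟩ := hx; exact ⟨n, h1, h2.trans hNN', h3⟩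
    have hnull : P (⋂ N, (F N)ᶜ) = 0 := by
      rw [ae_iff] at hcover
      rw [← Set.compl_iUnion]
      exact hcover
    set h : Ω → ℝ := fun x => 2 * |f x| + |c'| with hh
    have hhm : Measurable h := (hfm.abs.const_mul 2).add measurable_const
    have hhint : Integrable h P := (hfi.abs.const_mul 2).add (integrable_const _)
    have hhnn : ∀ x, 0 ≤ h x := fun x => by rw [hh]; positivity
    have htend : Tendsto (fun N => ∫ x, Set.indicator (F N)ᶜ h x ∂P) atTop
        (𝓝 (∫ x, Set.indicator (⋂ N, (F N)ᶜ) h x ∂P)) := by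
      apply tendsto_integral_of_dominated_convergence h
        (fun N => (hhm.indicator (hFm N).compl).aestronglyMeasurable) hhint
      · intro N
        filter_upwards with x
        rw [Real.norm_eq_abs]
        by_cases hx : x ∈ (F N)ᶜ
        · rw [Set.indicator_of_mem hx, abs_of_nonneg (hhnn x)]
        · rw [Set.indicator_of_notMem hx]; simpa using hhnn x
      · filter_upwards with x
        by_cases hx : x ∈ ⋃ N, F N
        · obtain ⟨N₀, hN₀⟩ := Set.mem_iUnion.mp hx
          have h1 : Set.indicator (⋂ N, (F N)ᶜ) h x = 0 := by
            apply Set.indicator_of_notMem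
            simp only [Set.mem_iInter, Set.mem_compl_iff, not_forall, not_not]
            exact ⟨N₀, hN₀⟩
          rw [h1]
          apply tendsto_atTop_of_eventually_const (i₀ := N₀)
          intro N hN
          exact Set.indicator_of_notMem (by simpa using hFmono hN hN₀) _
        · have hx' : ∀ N, Set.indicator (F N)ᶜ h x = h x := fun N =>
            Set.indicator_of_mem (by simpa using fun hc => hx (Set.mem_iUnion.mpr ⟨N, hc⟩)) _
          have hx'' : Set.indicator (⋂ N, (F N)ᶜ) h x = h x :=
            Set.indicator_of_mem (by
              simp only [Set.mem_iInter, Set.mem_compl_iff]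
              exact fun N hc => hx (Set.mem_iUnion.mpr ⟨N, hc⟩)) _
          rw [hx'']
          simp only [hx']
          exact tendsto_const_nhds
    have hzero : ∫ x, Set.indicator (⋂ N, (F N)ᶜ) h x ∂P = 0 := by
      rw [integral_indicator (MeasurableSet.iInter fun N => (hFm N).compl),
        show P.restrict (⋂ N, (F N)ᶜ) = 0 from Measure.restrict_eq_zero.mpr hnull,
        integral_zero_measure]
    rw [hzero] at htend
    have hev := htend.eventually (gt_mem_nhds (show (0:ℝ) < c' - μ₀ by linarith))
    obtain ⟨N, hNboth⟩ := (hev.and (eventually_ge_atTop 1)).exists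
    obtain ⟨hNint, hN1⟩ := hNboth
    -- construct the modified function
    set ftil : Ω → ℝ := fun x => if x ∈ F N then f x else max (f x) c' with hftil
    set g : Ω → ℝ := fun x => ftil x - c' with hgdef
    have hftilm : Measurable ftil := Measurable.ite (hFm N) hfm (hfm.max measurable_const)
    have hftil_ge : ∀ x, f x ≤ ftil x := fun x => by
      by_cases hx : x ∈ F N <;> simp [hftil, hx, le_max_left]
    have hftil_bound : ∀ x, |ftil x| ≤ |f x| + |c'| := by
      intro x
      by_cases hx : x ∈ F N
      · simp only [hftil, if_pos hx]
        linarith [abs_nonneg c', le_refl |f x|]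
      · simp only [hftil, if_neg hx]
        calc |max (f x) c'| ≤ max |f x| |c'| := abs_max_le_max_abs_abs
          _ ≤ |f x| + |c'| := max_le (by linarith [abs_nonneg c']) (by linarith [abs_nonneg (f x)])
    have hftilint : Integrable ftil P :=
      Integrable.mono' (hfi.abs.add (integrable_const |c'|)) hftilm.aestronglyMeasurable
        (Filter.Eventually.of_forall fun x => by
          rw [Real.norm_eq_abs]; exact hftil_bound x)
    have hgint : Integrable g P := hftilint.sub (integrable_const c')
    have hkeyhyp : ∀ y, ∃ n, 1 ≤ n ∧ n ≤ N ∧ 0 ≤ S T g n y := by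
      intro y
      have hSg : ∀ n, S T g n y = S T ftil n y - n * c' := by
        intro n
        have h1 := S_sub (T := T) ftil (fun _ => c') n y
        rw [S_const] at h1
        exact h1
      by_cases hy : y ∈ F N
      · obtain ⟨n, hn1, hnN, hSn⟩ := hy
        refine ⟨n, hn1, hnN, ?_⟩
        rw [hSg n]
        have h2 : S T f n y ≤ S T ftil n y := S_mono hftil_ge n y
        linarith
      · refine ⟨1, le_rfl, hN1, ?_⟩
        rw [hSg 1]
        have : S T ftil 1 y = ftil y := by unfold S; simp
        rw [this]
        simp only [hftil, if_neg hy]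
        push_cast
        linarith [le_max_right (f y) c']
    have hSgint := S_integrable hT.toMeasurePreserving hgint
    have hineq : ∀ M : ℕ, -((N:ℝ) * ∫ x, |g x| ∂P) ≤ (M:ℝ) * ∫ x, g x ∂P := by
      intro M
      have hpt := key_pointwise g N hkeyhyp M
      have hint1 : Integrable (fun x => -∑ i ∈ Finset.Ico (M - N) M, |g (T^[i] x)|) P :=
        (integrable_finset_sum _ fun i _ =>
          (integrable_comp_iterate hT.toMeasurePreserving hgint.abs i)).neg
      have hmono := integral_mono hint1 (hSgint M) fun x => hpt x
      rw [integral_S hT.toMeasurePreserving hgint M] at hmono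
      rw [integral_neg, integral_finset_sum _ (fun i _ =>
        integrable_comp_iterate hT.toMeasurePreserving hgint.abs i)] at hmono
      have hsum : ∑ i ∈ Finset.Ico (M-N) M, ∫ x, |g (T^[i] x)| ∂P
          = ((Finset.Ico (M-N) M).card : ℝ) * ∫ x, |g x| ∂P := by
        rw [Finset.sum_congr rfl fun i _ =>
          integral_comp_iterate hT.toMeasurePreserving hgint.abs.aestronglyMeasurable i,
          Finset.sum_const, nsmul_eq_mul]
      rw [hsum] at hmono
      have hcard : ((Finset.Ico (M-N) M).card : ℝ) ≤ N := by
        have hle : M - (M - N) ≤ N := by omega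
        rw [Nat.card_Ico]
        exact_mod_cast hle
      have habs_nn : (0:ℝ) ≤ ∫ x, |g x| ∂P := integral_nonneg fun x => abs_nonneg _
      nlinarith
    have hg0 : 0 ≤ ∫ x, g x ∂P := by
      by_contra hneg
      push_neg at hneg
      obtain ⟨M, hM⟩ := exists_nat_gt ((N * ∫ x, |g x| ∂P) / (-∫ x, g x ∂P))
      have h2 : (N:ℝ) * ∫ x, |g x| ∂P < M * (-∫ x, g x ∂P) :=
        (div_lt_iff₀ (by linarith)).mp hM
      have := hineq M
      nlinarith
    have hintg : ∫ x, g x ∂P = (∫ x, ftil x ∂P) - c' := by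
      rw [hgdef]
      rw [integral_sub hftilint (integrable_const c'), integral_const, probReal_univ, one_smul]
    have hc'le : c' ≤ ∫ x, ftil x ∂P := by linarith
    have hptb : ∀ x, ftil x - f x ≤ Set.indicator (F N)ᶜ h x := by
      intro x
      by_cases hx : x ∈ F N
      · rw [Set.indicator_of_notMem (by simpa using hx)]
        simp [hftil, hx]
      · rw [Set.indicator_of_mem (by simpa using hx)]
        simp only [hftil, if_neg hx, hh]
        have h1 : max (f x) c' ≤ |f x| + |c'| :=
          max_le (by linarith [le_abs_self (f x), abs_nonneg c'])
            (by linarith [le_abs_self c', abs_nonneg (f x)])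
        have h2 : -f x ≤ |f x| := neg_le_abs _
        linarith
    have hindint : Integrable (Set.indicator (F N)ᶜ h) P := hhint.indicator (hFm N).compl
    have hfinal : ∫ x, (ftil x - f x) ∂P ≤ ∫ x, Set.indicator (F N)ᶜ h x ∂P :=
      integral_mono (hftilint.sub hfi) hindint hptb
    rw [integral_sub hftilint hfi] at hfinal
    -- c' ≤ ∫ ftil ≤ μ₀ + (< c' - μ₀) : contradiction
    linarith


/-- Birkhoff's pointwise ergodic theorem for a measurable integrable function. -/
lemma birkhoff_meas (hT : Ergodic T P) {f : Ω → ℝ} (hfm : Measurable f) (hfi : Integrable f P) :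
    ∀ᵐ x ∂P, Tendsto (fun n : ℕ => (n:ℝ)⁻¹ * S T f n x) atTop (𝓝 (∫ x, f x ∂P)) := by
  have hδpos : ∀ k : ℕ, (0:ℝ) < 1 / ((k:ℝ) + 1) := fun k => by positivity
  have hup : ∀ k : ℕ, ∀ᵐ x ∂P, ∀ᶠ n : ℕ in atTop,
      S T f n x ≤ n * ((∫ x, f x ∂P) + 1 / ((k:ℝ) + 1)) :=
    fun k => core hT hfm hfi (by linarith [hδpos k])
  have hdown : ∀ k : ℕ, ∀ᵐ x ∂P, ∀ᶠ n : ℕ in atTop,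
      (n:ℝ) * ((∫ x, f x ∂P) - 1 / ((k:ℝ) + 1)) ≤ S T f n x := by
    intro k
    have h := core hT hfm.neg hfi.neg
      (c := -(∫ x, f x ∂P) + 1 / ((k:ℝ) + 1))
      (by rw [integral_neg']; linarith [hδpos k])
    filter_upwards [h] with x hx
    filter_upwards [hx] with n hn
    rw [show S T (-f) n x = S T (fun x => -f x) n x from rfl, S_neg] at hn
    have h2 : (n:ℝ) * ((∫ x, f x ∂P) - 1 / ((k:ℝ) + 1))
        = -((n:ℝ) * (-(∫ x, f x ∂P) + 1 / ((k:ℝ) + 1))) := by ring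
    rw [h2]
    linarith
  filter_upwards [ae_all_iff.mpr hup, ae_all_iff.mpr hdown] with x hux hdx
  rw [Metric.tendsto_atTop]
  intro ε hε
  obtain ⟨k, hk⟩ := exists_nat_one_div_lt hε
  have hboth := ((hux k).and (hdx k)).and (eventually_ge_atTop 1)
  rw [eventually_atTop] at hboth
  obtain ⟨N, hN⟩ := hboth
  refine ⟨N, fun n hn => ?_⟩
  obtain ⟨⟨h1, h2⟩, h3⟩ := hN n hn
  have hn0 : (0:ℝ) < n := by exact_mod_cast h3
  have e1 : (n:ℝ)⁻¹ * S T f n x ≤ (∫ x, f x ∂P) + 1/((k:ℝ)+1) :=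
    (inv_mul_le_iff₀ hn0).mpr h1
  have e2 : (∫ x, f x ∂P) - 1/((k:ℝ)+1) ≤ (n:ℝ)⁻¹ * S T f n x := by
    rw [← sub_nonneg] at h2 ⊢
    have := mul_le_mul_of_nonneg_left h2 (le_of_lt (inv_pos.mpr hn0))
    calc (0:ℝ) ≤ (n:ℝ)⁻¹ * (S T f n x - (n:ℝ) * ((∫ x, f x ∂P) - 1/((k:ℝ)+1))) := by
          simpa using this
      _ = (n:ℝ)⁻¹ * S T f n x - ((∫ x, f x ∂P) - 1/((k:ℝ)+1)) := by
          field_simp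
  rw [Real.dist_eq, abs_lt]
  constructor <;> [linarith; linarith]

/-- Birkhoff's pointwise ergodic theorem, a.e.-measurable version. -/
lemma birkhoff_ae (hT : Ergodic T P) {f : Ω → ℝ} (hfi : Integrable f P) :
    ∀ᵐ x ∂P, Tendsto (fun n : ℕ => (n:ℝ)⁻¹ * S T f n x) atTop (𝓝 (∫ x, f x ∂P)) := by
  obtain ⟨f', hf'm, hff'⟩ : ∃ f', Measurable f' ∧ f =ᵐ[P] f' :=
    ⟨hfi.1.mk f, hfi.1.stronglyMeasurable_mk.measurable, hfi.1.ae_eq_mk⟩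
  have hf'i : Integrable f' P := hfi.congr hff'
  have hint_eq : ∫ x, f x ∂P = ∫ x, f' x ∂P := integral_congr_ae hff'
  have horb : ∀ᵐ x ∂P, ∀ i : ℕ, f (T^[i] x) = f' (T^[i] x) := by
    rw [ae_all_iff]
    intro i
    exact ((hT.toMeasurePreserving.iterate i).quasiMeasurePreserving.tendsto_ae).eventually hff'
  filter_upwards [birkhoff_meas hT hf'm hf'i, horb] with x hx hox
  rw [hint_eq]
  refine Tendsto.congr (fun n => ?_) hx
  unfold S
  rw [Finset.sum_congr rfl fun i _ => (hox i).symm]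

end BirkAux

/-- For a stationary ergodic integrable time series `Xᵢ = X ∘ T^[i]`
(with `T` an ergodic measure-preserving shift) with mean `μ`, the proportion of
indices `i ≤ n` with `Xᵢ` strictly between `min(X̄ₙ, μ)` and `max(X̄ₙ, μ)` tends to `0`
almost surely. -/
theorem stmt_4 {Ω : Type*} [MeasurableSpace Ω] (P : Measure Ω) [IsProbabilityMeasure P]
    (T : Ω → Ω) (hT : Ergodic T P)
    (X : Ω → ℝ) (hX : Integrable X P) (μ : ℝ) (hμ : μ = ∫ ω, X ω ∂P)
    (Xbar : ℕ → Ω → ℝ)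
    (hXbar : ∀ n ω, Xbar n ω = (n : ℝ)⁻¹ * ∑ i ∈ Finset.range n, X (T^[i] ω)) :
    ∀ᵐ ω ∂P, Tendsto
      (fun n : ℕ =>
        ((Finset.range n).filter (fun i =>
            min (Xbar n ω) μ < X (T^[i] ω) ∧ X (T^[i] ω) < max (Xbar n ω) μ)).card / (n : ℝ))
      atTop (nhds 0) := by
  classical
  obtain ⟨X', hX'm, hXX'⟩ : ∃ X', Measurable X' ∧ X =ᵐ[P] X' :=
    ⟨hX.1.mk X, hX.1.stronglyMeasurable_mk.measurable, hX.1.ae_eq_mk⟩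
  have hX'i : Integrable X' P := hX.congr hXX'
  have hμ' : μ = ∫ x, X' x ∂P := hμ.trans (integral_congr_ae hXX')
  have horb : ∀ᵐ ω ∂P, ∀ i : ℕ, X (T^[i] ω) = X' (T^[i] ω) := by
    rw [ae_all_iff]
    intro i
    exact ((hT.toMeasurePreserving.iterate i).quasiMeasurePreserving.tendsto_ae).eventually hXX'
  have hδpos : ∀ k : ℕ, (0:ℝ) < 1 / ((k:ℝ) + 1) := fun k => by positivity
  set A : ℕ → Set Ω := fun k => {ω | X' ω ≠ μ ∧ |X' ω - μ| < 1/((k:ℝ)+1)} with hA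
  have hAm : ∀ k, MeasurableSet (A k) := by
    intro k
    have h1 : MeasurableSet {ω | X' ω = μ} := measurableSet_eq_fun hX'm measurable_const
    have h2 : MeasurableSet {ω | |X' ω - μ| < 1/((k:ℝ)+1)} :=
      measurableSet_lt ((hX'm.sub measurable_const).abs) measurable_const
    have : A k = {ω | X' ω = μ}ᶜ ∩ {ω | |X' ω - μ| < 1/((k:ℝ)+1)} := by
      ext ω; simp [hA]
    rw [this]
    exact h1.compl.inter h2
  set g : ℕ → Ω → ℝ := fun k => (A k).indicator (fun _ => (1:ℝ)) with hg
  have hgnn : ∀ k y, 0 ≤ g k y := fun k y => Set.indicator_nonneg (fun _ _ => zero_le_one) y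
  have hgi : ∀ k, Integrable (g k) P := fun k => (integrable_const 1).indicator (hAm k)
  have hgint : ∀ k, ∫ ω, g k ω ∂P = (P (A k)).toReal := by
    intro k
    rw [hg]
    rw [integral_indicator_const (1:ℝ) (hAm k), smul_eq_mul, mul_one]
    rfl
  have hbirkg : ∀ k, ∀ᵐ ω ∂P,
      Tendsto (fun n : ℕ => (n:ℝ)⁻¹ * BirkAux.S T (g k) n ω) atTop (𝓝 ((P (A k)).toReal)) := by
    intro k
    have := BirkAux.birkhoff_ae hT (hgi k)
    rwa [hgint k] at this
  have hAanti : Antitone A := by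
    intro k k' hkk' ω hω
    obtain ⟨h1, h2⟩ := hω
    refine ⟨h1, lt_of_lt_of_le h2 ?_⟩
    apply one_div_le_one_div_of_le (by positivity)
    have : (k:ℝ) ≤ k' := Nat.cast_le.mpr hkk'
    linarith
  have hAempty : ⋂ k, A k = ∅ := by
    ext ω
    simp only [Set.mem_iInter, Set.mem_empty_iff_false, iff_false, not_forall]
    by_cases hne : X' ω = μ
    · exact ⟨0, fun hc => hc.1 hne⟩
    · have hpos : 0 < |X' ω - μ| := abs_pos.mpr (sub_ne_zero.mpr hne)
      obtain ⟨k, hk⟩ := exists_nat_one_div_lt hpos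
      exact ⟨k, fun hc => absurd hc.2 (not_lt.mpr hk.le)⟩
  have hPA : Tendsto (fun k => (P (A k)).toReal) atTop (𝓝 0) := by
    have h1 : Tendsto (fun k => P (A k)) atTop (𝓝 0) := by
      have := tendsto_measure_iInter_atTop (μ := P) (fun k => (hAm k).nullMeasurableSet)
        hAanti ⟨0, measure_ne_top P (A 0)⟩
      rwa [hAempty, measure_empty] at this
    have h2 := (ENNReal.tendsto_toReal (a := 0) (by simp)).comp h1
    exact h2
  filter_upwards [BirkAux.birkhoff_ae hT hX'i, horb, ae_all_iff.mpr hbirkg] with ω hb ho hbg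
  have hXbar_eq : ∀ n, Xbar n ω = (n:ℝ)⁻¹ * BirkAux.S T X' n ω := by
    intro n
    rw [hXbar]
    congr 1
    exact Finset.sum_congr rfl fun i _ => ho i
  have hXbartend : Tendsto (fun n => Xbar n ω) atTop (𝓝 μ) := by
    rw [hμ']
    exact Tendsto.congr (fun n => (hXbar_eq n).symm) hb
  rw [NormedAddCommGroup.tendsto_nhds_zero]
  intro ε hε
  obtain ⟨k, hk⟩ := (hPA.eventually (gt_mem_nhds (half_pos hε))).exists
  have hev1 : ∀ᶠ n in atTop, |Xbar n ω - μ| < 1/((k:ℝ)+1) := by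
    have := Metric.tendsto_atTop.mp hXbartend (1/((k:ℝ)+1)) (hδpos k)
    rw [eventually_atTop]
    obtain ⟨N, hN⟩ := this
    exact ⟨N, fun n hn => by rw [← Real.dist_eq]; exact hN n hn⟩
  have hev2 : ∀ᶠ n : ℕ in atTop, (n:ℝ)⁻¹ * BirkAux.S T (g k) n ω < ε :=
    (hbg k).eventually (gt_mem_nhds (show (P (A k)).toReal < ε by linarith))
  filter_upwards [hev1, hev2] with n h1 h2
  by_cases hn0 : n = 0
  · subst hn0
    simpa using hε
  have hnpos : (0:ℝ) < n := by
    have : 1 ≤ n := Nat.one_le_iff_ne_zero.mpr hn0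
    exact_mod_cast this
  set p : ℕ → Prop := fun i =>
    min (Xbar n ω) μ < X (T^[i] ω) ∧ X (T^[i] ω) < max (Xbar n ω) μ with hp
  have hsub : ∀ i ∈ (Finset.range n).filter p, g k (T^[i] ω) = 1 := by
    intro i hi
    rw [Finset.mem_filter] at hi
    obtain ⟨-, hmin, hmax⟩ := hi
    set b := Xbar n ω
    set a := X (T^[i] ω) with ha
    have haX' : a = X' (T^[i] ω) := ho i
    have hane : a ≠ μ := by
      intro haμ
      rw [haμ] at hmin hmax
      rcases min_lt_iff.mp hmin with hb | hb
      · exact absurd ((lt_max_iff.mp hmax).resolve_right (lt_irrefl μ)) (not_lt.mpr hb.le)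
      · exact lt_irrefl μ hb
    have habs : |a - μ| < 1/((k:ℝ)+1) := by
      have hmaxle : max b μ ≤ μ + |b - μ| :=
        max_le (by linarith [le_abs_self (b - μ)]) (by linarith [abs_nonneg (b - μ)])
      have hminge : μ - |b - μ| ≤ min b μ :=
        le_min (by linarith [neg_abs_le (b - μ)]) (by linarith [abs_nonneg (b - μ)])
      rw [abs_lt]
      constructor <;> [linarith [lt_of_le_of_lt (le_trans hminge hmin.le) (lt_of_lt_of_le (lt_of_le_of_lt (le_refl a) (lt_of_lt_of_le hmax hmaxle)) (le_refl _))]; skip]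
      · linarith [lt_of_lt_of_le hmax hmaxle]
    have hmem : T^[i] ω ∈ A k := by
      rw [hA]
      exact ⟨by rwa [← haX'], by rwa [← haX']⟩
    rw [hg]
    exact Set.indicator_of_mem hmem _
  have hcard : ((((Finset.range n).filter p).card : ℕ) : ℝ) ≤ BirkAux.S T (g k) n ω := by
    have e1 : ((((Finset.range n).filter p).card : ℕ) : ℝ)
        = ∑ i ∈ (Finset.range n).filter p, (1:ℝ) := by
      rw [Finset.sum_const, nsmul_eq_mul, mul_one]
    rw [e1]
    have e2 : ∑ i ∈ (Finset.range n).filter p, (1:ℝ)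
        = ∑ i ∈ (Finset.range n).filter p, g k (T^[i] ω) :=
      Finset.sum_congr rfl fun i hi => (hsub i hi).symm
    rw [e2]
    exact Finset.sum_le_sum_of_subset_of_nonneg (Finset.filter_subset _ _)
      fun i _ _ => hgnn k _
  have hfrac_nonneg : (0:ℝ) ≤ (((Finset.range n).filter p).card : ℝ) / n :=
    div_nonneg (Nat.cast_nonneg _) (Nat.cast_nonneg _)
  rw [Real.norm_eq_abs, abs_of_nonneg hfrac_nonneg]
  calc (((Finset.range n).filter p).card : ℝ) / n
      = (n:ℝ)⁻¹ * ((Finset.range n).filter p).card := by rw [div_eq_inv_mul]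
    _ ≤ (n:ℝ)⁻¹ * BirkAux.S T (g k) n ω :=
      mul_le_mul_of_nonneg_left hcard (inv_nonneg.mpr (Nat.cast_nonneg n))
    _ < ε := h2
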